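/- Let $s$ and $(\boldsymbol{l},\boldsymbol{m},\boldsymbol{j})$ satisfy $0\le j_t\le\min(l_t,m_t)$ for $t=s,s+1$, together with $j_s<l_s$ and $j_{s+1}<m_{s+1}$. Then $A_4\ne0$, and for each $t\in\{1,2,3\}$ the rational function $A_t/A_4\in\mathbb{Q}(q)$ is regular at $q=0$ and vanishes at $q=0$ (i.e. $A_t/A_4\in qA$, where $A$ is the subring of $\mathbb{Q}(q)$ of rational functions regular at $q=0$). -/

import Mathlib

/- Common setup: the quantum affine algebra U_q(A^{(1)}_{2n-1}) acting on symmetric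
tensor representations V_{l,x} and their duals, coideal operators b_i, tensor products,
and the K matrix, following Kusano-Okado. -/

noncomputable section
namespace AII

open scoped TensorProduct Classical
open Finset

/-- The base field F = ℚ(q). -/
abbrev F : Type := RatFunc ℚ

/-- The quantum parameter q. -/
def qq : F := RatFunc.X

/-- Quantum integer [a] = (q^a - q^{-a})/(q - q⁻¹). -/
def qint (a : ℤ) : F := (qq ^ a - qq ^ (-a)) / (qq - qq⁻¹)

/-- Quantum factorial [a]!. -/
def qfact (a : ℕ) : F := ∏ k ∈ Finset.range a, qint (k + 1)

/-- Quantum binomial coefficient. -/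
def qbinom (j p : ℕ) : F := qfact j / (qfact p * qfact (j - p))

instance (n : ℕ) [NeZero n] : NeZero (2 * n) := ⟨by have := NeZero.ne n; omega⟩

/-- Helper instance: zero of a tensor product (works around a stuck instance search). -/
noncomputable instance {R M N : Type*} [CommSemiring R] [AddCommMonoid M] [Module R M]
    [AddCommMonoid N] [Module R N] : Zero (TensorProduct R M N) :=
  (inferInstance : AddCommMonoid (TensorProduct R M N)).toZero

/-- Index set ℤ/2n for nodes of the Dynkin diagram / entries of weight vectors. -/
abbrev Zn (n : ℕ) := ZMod (2 * n)

/-- Membership in B_l : all entries nonnegative and summing to l. -/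
def inB (n : ℕ) [NeZero n] (l : ℕ) (α : Zn n → ℤ) : Prop :=
  (∀ i, 0 ≤ α i) ∧ (∑ i, α i) = (l : ℤ)

/-- The vector space V_{l} with basis indexed by B_l. -/
abbrev V (n : ℕ) [NeZero n] (l : ℕ) := {α : Zn n → ℤ // inB n l α} →₀ F

/-- Basis vector v_α, with the convention that it is 0 if α ∉ B_l
(in particular if α has a negative entry). -/
def vB (n : ℕ) [NeZero n] (l : ℕ) (α : Zn n → ℤ) : V n l :=
  if h : inB n l α then Finsupp.single ⟨α, h⟩ 1 else 0

/-- Helper: the linear operator sending v_α ↦ c(α) • v_{sh(α)}. -/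
def opOf (n : ℕ) [NeZero n] (l : ℕ) (c : (Zn n → ℤ) → F)
    (sh : (Zn n → ℤ) → (Zn n → ℤ)) : V n l →ₗ[F] V n l :=
  Finsupp.lsum F fun a => LinearMap.toSpanSingleton F (V n l) (c a.1 • vB n l (sh a.1))

/-- The i-th standard unit vector e_i of ℤ^{2n}. -/
def eu (n : ℕ) [NeZero n] (i : Zn n) : Zn n → ℤ := fun j => if j = i then 1 else 0

/-- Chevalley generator e_i on V_{l,x}. -/
def eOp (n : ℕ) [NeZero n] (l : ℕ) (x : F) (i : Zn n) : V n l →ₗ[F] V n l :=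
  opOf n l (fun α => (if i = 0 then x else 1) * qint (α (i + 1)))
    (fun α => α + eu n i - eu n (i + 1))

/-- Chevalley generator f_i on V_{l,x}. -/
def fOp (n : ℕ) [NeZero n] (l : ℕ) (x : F) (i : Zn n) : V n l →ₗ[F] V n l :=
  opOf n l (fun α => (if i = 0 then x⁻¹ else 1) * qint (α i))
    (fun α => α - eu n i + eu n (i + 1))

/-- Cartan generator k_i on V_{l,x}. -/
def kOp (n : ℕ) [NeZero n] (l : ℕ) (i : Zn n) : V n l →ₗ[F] V n l :=
  opOf n l (fun α => qq ^ (α i - α (i + 1))) id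

/-- Inverse Cartan generator k_i⁻¹ on V_{l,x}. -/
def kInvOp (n : ℕ) [NeZero n] (l : ℕ) (i : Zn n) : V n l →ₗ[F] V n l :=
  opOf n l (fun α => qq ^ (-(α i - α (i + 1)))) id

/-- e_i on the dual representation V^*_{l,x}. -/
def eSOp (n : ℕ) [NeZero n] (l : ℕ) (x : F) (i : Zn n) : V n l →ₗ[F] V n l :=
  opOf n l (fun α => (if i = 0 then x else 1) * qint (α i))
    (fun α => α - eu n i + eu n (i + 1))

/-- f_i on the dual representation V^*_{l,x}. -/
def fSOp (n : ℕ) [NeZero n] (l : ℕ) (x : F) (i : Zn n) : V n l →ₗ[F] V n l :=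
  opOf n l (fun α => (if i = 0 then x⁻¹ else 1) * qint (α (i + 1)))
    (fun α => α + eu n i - eu n (i + 1))

/-- k_i on the dual representation V^*_{l,x}. -/
def kSOp (n : ℕ) [NeZero n] (l : ℕ) (i : Zn n) : V n l →ₗ[F] V n l :=
  opOf n l (fun α => qq ^ (-(α i - α (i + 1)))) id

/-- k_i⁻¹ on the dual representation V^*_{l,x}. -/
def kSInvOp (n : ℕ) [NeZero n] (l : ℕ) (i : Zn n) : V n l →ₗ[F] V n l :=
  opOf n l (fun α => qq ^ (α i - α (i + 1))) id

/-- The coideal generator b_i built from families of operators e, f, k⁻¹: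
b_i = f_i + γ_i (e_{i+1}e_{i-1}e_i - q⁻¹(e_{i+1}e_ie_{i-1}+e_{i-1}e_ie_{i+1})
  + q⁻²e_ie_{i-1}e_{i+1}) k_i⁻¹. -/
def bOf (n : ℕ) [NeZero n] {M : Type*} [AddCommMonoid M] [Module F M]
    (e f kinv : Zn n → (M →ₗ[F] M)) (γ : Zn n → F) (i : Zn n) : M →ₗ[F] M :=
  f i + γ i • ((e (i + 1) ∘ₗ e (i - 1) ∘ₗ e i
      + (-qq⁻¹) • (e (i + 1) ∘ₗ e i ∘ₗ e (i - 1) + e (i - 1) ∘ₗ e i ∘ₗ e (i + 1))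
      + (qq ^ (-2 : ℤ)) • (e i ∘ₗ e (i - 1) ∘ₗ e (i + 1))) ∘ₗ kinv i)

/-- b_i on V_{l,x}. -/
def bOp (n : ℕ) [NeZero n] (l : ℕ) (x : F) (γ : Zn n → F) (i : Zn n) :
    V n l →ₗ[F] V n l :=
  bOf n (fun j => eOp n l x j) (fun j => fOp n l x j) (fun j => kInvOp n l j) γ i

/-- b_i on V^*_{l,x}. -/
def bSOp (n : ℕ) [NeZero n] (l : ℕ) (x : F) (γ : Zn n → F) (i : Zn n) :
    V n l →ₗ[F] V n l :=
  bOf n (fun j => eSOp n l x j) (fun j => fSOp n l x j) (fun j => kSInvOp n l j) γ i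

/-- Coproduct action of e: E = e ⊗ 1 + k ⊗ e. -/
def coE {M N : Type*} [AddCommGroup M] [Module F M] [AddCommGroup N] [Module F N]
    (e1 k1 : M →ₗ[F] M) (e2 : N →ₗ[F] N) : M ⊗[F] N →ₗ[F] M ⊗[F] N :=
  TensorProduct.map e1 LinearMap.id + TensorProduct.map k1 e2

/-- Coproduct action of f: F = f ⊗ k⁻¹ + 1 ⊗ f. -/
def coF {M N : Type*} [AddCommGroup M] [Module F M] [AddCommGroup N] [Module F N]
    (f1 : M →ₗ[F] M) (kinv2 f2 : N →ₗ[F] N) : M ⊗[F] N →ₗ[F] M ⊗[F] N :=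
  TensorProduct.map f1 kinv2 + TensorProduct.map LinearMap.id f2

/-- Coproduct action of k^{±1}: K = k ⊗ k. -/
def coK {M N : Type*} [AddCommGroup M] [Module F M] [AddCommGroup N] [Module F N]
    (k1 : M →ₗ[F] M) (k2 : N →ₗ[F] N) : M ⊗[F] N →ₗ[F] M ⊗[F] N :=
  TensorProduct.map k1 k2

/-- A bundle of operator families (e_i, f_i, k_i, k_i⁻¹) on a module. -/
structure Ops (n : ℕ) [NeZero n] (M : Type*) [AddCommGroup M] [Module F M] where
  e : Zn n → M →ₗ[F] M
  f : Zn n → M →ₗ[F] M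
  k : Zn n → M →ₗ[F] M
  kinv : Zn n → M →ₗ[F] M

/-- The operator bundle of V_{l,x}. -/
def VOps (n : ℕ) [NeZero n] (l : ℕ) (x : F) : Ops n (V n l) :=
  ⟨fun i => eOp n l x i, fun i => fOp n l x i, fun i => kOp n l i, fun i => kInvOp n l i⟩

/-- The operator bundle of V^*_{l,x}. -/
def VSOps (n : ℕ) [NeZero n] (l : ℕ) (x : F) : Ops n (V n l) :=
  ⟨fun i => eSOp n l x i, fun i => fSOp n l x i, fun i => kSOp n l i, fun i => kSInvOp n l i⟩

/-- Coproduct operator bundle on a tensor product of two representations. -/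
def tensorOps {n : ℕ} [NeZero n] {M N : Type*} [AddCommGroup M] [Module F M]
    [AddCommGroup N] [Module F N] (A : Ops n M) (B : Ops n N) : Ops n (M ⊗[F] N) where
  e := fun i => coE (A.e i) (A.k i) (B.e i)
  f := fun i => coF (A.f i) (B.kinv i) (B.f i)
  k := fun i => coK (A.k i) (B.k i)
  kinv := fun i => coK (A.kinv i) (B.kinv i)

/-- R intertwines the bundles A and B: R ∘ a = a ∘ R for all generators. -/
def Intertwines {n : ℕ} [NeZero n] {M N : Type*} [AddCommGroup M] [Module F M]
    [AddCommGroup N] [Module F N] (A : Ops n M) (B : Ops n N) (R : M →ₗ[F] N) : Prop :=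
  ∀ i : Zn n, R ∘ₗ A.e i = B.e i ∘ₗ R ∧ R ∘ₗ A.f i = B.f i ∘ₗ R ∧
    R ∘ₗ A.k i = B.k i ∘ₗ R ∧ R ∘ₗ A.kinv i = B.kinv i ∘ₗ R

/-- E_i on V_{l,x} ⊗ V_{m,y}. -/
def tE (n : ℕ) [NeZero n] (l m : ℕ) (x y : F) (i : Zn n) :
    V n l ⊗[F] V n m →ₗ[F] V n l ⊗[F] V n m := (tensorOps (VOps n l x) (VOps n m y)).e i

/-- F_i on V_{l,x} ⊗ V_{m,y}. -/
def tF (n : ℕ) [NeZero n] (l m : ℕ) (x y : F) (i : Zn n) :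
    V n l ⊗[F] V n m →ₗ[F] V n l ⊗[F] V n m := (tensorOps (VOps n l x) (VOps n m y)).f i

/-- K_i on V_{l,x} ⊗ V_{m,y}. -/
def tK (n : ℕ) [NeZero n] (l m : ℕ) (x y : F) (i : Zn n) :
    V n l ⊗[F] V n m →ₗ[F] V n l ⊗[F] V n m := (tensorOps (VOps n l x) (VOps n m y)).k i

/-- K_i⁻¹ on V_{l,x} ⊗ V_{m,y}. -/
def tKInv (n : ℕ) [NeZero n] (l m : ℕ) (x y : F) (i : Zn n) :
    V n l ⊗[F] V n m →ₗ[F] V n l ⊗[F] V n m := (tensorOps (VOps n l x) (VOps n m y)).kinv i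

/-- B_i on V_{l,x} ⊗ V_{m,y}. -/
def tB (n : ℕ) [NeZero n] (l m : ℕ) (x y : F) (γ : Zn n → F) (i : Zn n) :
    V n l ⊗[F] V n m →ₗ[F] V n l ⊗[F] V n m :=
  bOf n (fun j => tE n l m x y j) (fun j => tF n l m x y j) (fun j => tKInv n l m x y j) γ i

/-- The entry permutation σ^{(ε)}: switches α_{i-1} and α_i whenever i ≡ ε (mod 2),
i.e. pairs {ε+2k-1, ε+2k}. -/
def sigmaPerm (n : ℕ) [NeZero n] (ε : ℕ) (j : Zn n) : Zn n :=
  if (j - (ε : Zn n)).val % 2 = 1 then j + 1 else j - 1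

/-- Action of σ^{(ε)} on entry vectors. -/
def sigmaAct (n : ℕ) [NeZero n] (ε : ℕ) (α : Zn n → ℤ) : Zn n → ℤ :=
  fun j => α (sigmaPerm n ε j)

/-- The coefficient of the K matrix:
x^{ε(α_1-α_{2n})} ∏_{j=ε,ε+2,…,ε+2n-2} (-q⁻¹γ_j)^{-∑_{i=ε+1}^{j} α_i}. -/
def Kcoef (n : ℕ) [NeZero n] (x : F) (γ : Zn n → F) (ε : ℕ) (α : Zn n → ℤ) : F :=
  x ^ ((ε : ℤ) * (α 1 - α 0)) *
    ∏ k ∈ Finset.range n,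
      (-qq⁻¹ * γ ((ε : Zn n) + 2 * (k : Zn n))) ^
        (-(∑ r ∈ Finset.range (2 * k), α ((ε : Zn n) + 1 + (r : Zn n))))

/-- The explicit K matrix K(x) : V_{l,x} → V^*_{l,x⁻¹},
v_α ↦ Kcoef(α) v^*_{σ^{(ε)}(α)}. -/
def Kmap (n : ℕ) [NeZero n] (l : ℕ) (x : F) (γ : Zn n → F) (ε : ℕ) :
    V n l →ₗ[F] V n l :=
  opOf n l (fun α => Kcoef n x γ ε α) (sigmaAct n ε)

/-- The simplified K matrix (for γ_j = -q): v_α ↦ x^{ε(α_1-α_{2n})} v^*_{σ^{(ε)}(α)}. -/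
def KmapS (n : ℕ) [NeZero n] (l : ℕ) (x : F) (ε : ℕ) : V n l →ₗ[F] V n l :=
  opOf n l (fun α => x ^ ((ε : ℤ) * (α 1 - α 0))) (sigmaAct n ε)

/-- Cartan matrix of A^{(1)}_{2n-1}: a_{ij} = 2δ_{ij} - δ_{i,j+1} - δ_{i,j-1}. -/
def cartan (n : ℕ) [NeZero n] (i j : Zn n) : ℤ :=
  (if i = j then 2 else 0) - (if i = j + 1 then 1 else 0) - (if i = j - 1 then 1 else 0)

/- ### sl2 representations U_l -/

/-- The (l+1)-dimensional irreducible U_q(sl_2)-module U_l. -/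
abbrev UL (l : ℕ) := {p : ℕ × ℕ // p.1 + p.2 = l} →₀ F

/-- Basis vector u_{(a,b)} of U_l, zero when out of range. -/
def uB (l : ℕ) (a b : ℤ) : UL l :=
  if h : 0 ≤ a ∧ 0 ≤ b ∧ a.toNat + b.toNat = l then Finsupp.single ⟨(a.toNat, b.toNat), h.2.2⟩ 1
  else 0

/-- Helper for sl2 operators. -/
def slOf (l : ℕ) (c : ℕ × ℕ → F) (sh : ℕ × ℕ → ℤ × ℤ) : UL l →ₗ[F] UL l :=
  Finsupp.lsum F fun a => LinearMap.toSpanSingleton F (UL l) (c a.1 • uB l (sh a.1).1 (sh a.1).2)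

/-- e on U_l : u_{(a,b)} ↦ [b]u_{(a+1,b-1)}. -/
def esl (l : ℕ) : UL l →ₗ[F] UL l :=
  slOf l (fun p => qint p.2) (fun p => ((p.1 : ℤ) + 1, (p.2 : ℤ) - 1))

/-- f on U_l : u_{(a,b)} ↦ [a]u_{(a-1,b+1)}. -/
def fsl (l : ℕ) : UL l →ₗ[F] UL l :=
  slOf l (fun p => qint p.1) (fun p => ((p.1 : ℤ) - 1, (p.2 : ℤ) + 1))

/-- k on U_l. -/
def ksl (l : ℕ) : UL l →ₗ[F] UL l :=
  slOf l (fun p => qq ^ ((p.1 : ℤ) - (p.2 : ℤ))) (fun p => ((p.1 : ℤ), (p.2 : ℤ)))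

/-- k⁻¹ on U_l. -/
def kslInv (l : ℕ) : UL l →ₗ[F] UL l :=
  slOf l (fun p => qq ^ (-((p.1 : ℤ) - (p.2 : ℤ)))) (fun p => ((p.1 : ℤ), (p.2 : ℤ)))

/-- The highest weight vector w^{(l,m)}_j of U_{l+m-2j} ⊂ U_l ⊗ U_m. -/
def wsl (l m j : ℕ) : UL l ⊗[F] UL m :=
  ∑ p ∈ Finset.range (j + 1),
    ((-1 : F) ^ p * qq ^ ((p : ℤ) * ((l : ℤ) - p + 1)) * qbinom j p) •
      (uB l ((l : ℤ) - p) p ⊗ₜ[F] uB m ((m : ℤ) - j + p) ((j : ℤ) - p))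

/- ### The U(I_•)-highest weight vectors of V_l ⊗ V_m -/

/-- The index t ∈ {1,…,n} (0-based, in Fin n) of the sl2-pair containing
the entry position i : the pairs are {2t-1, 2t}. -/
def pairIdx (n : ℕ) [NeZero n] (i : Zn n) : Fin n :=
  if i.val % 2 = 1 then Fin.ofNat n (i.val / 2 : ℕ) else Fin.ofNat n ((i.val + 2 * n - 2) / 2 : ℕ)

/-- The entry vector α with α_{2t-1} = l_t - p_t, α_{2t} = p_t. -/
def alphaOf (n : ℕ) [NeZero n] (bl : Fin n → ℤ) (p : Fin n → ℕ) : Zn n → ℤ :=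
  fun i => if i.val % 2 = 1 then bl (pairIdx n i) - p (pairIdx n i) else (p (pairIdx n i) : ℤ)

/-- The entry vector β with β_{2t-1} = m_t - j_t + p_t, β_{2t} = j_t - p_t. -/
def betaOf (n : ℕ) [NeZero n] (bm bj : Fin n → ℤ) (p : Fin n → ℕ) : Zn n → ℤ :=
  fun i => if i.val % 2 = 1 then bm (pairIdx n i) - bj (pairIdx n i) + p (pairIdx n i)
    else bj (pairIdx n i) - p (pairIdx n i)

/-- Admissibility of a triple (𝒍, 𝒎, 𝒋). -/
def adm (n : ℕ) [NeZero n] (l m : ℕ) (bl bm bj : Fin n → ℤ) : Prop :=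
  (∀ t, 0 ≤ bl t) ∧ (∀ t, 0 ≤ bm t) ∧ (∑ t, bl t) = (l : ℤ) ∧ (∑ t, bm t) = (m : ℤ) ∧
    (∀ t, 0 ≤ bj t ∧ bj t ≤ min (bl t) (bm t))

/-- The U(I_•)-highest weight vector 𝒘^{(𝒍,𝒎)}_𝒋 ∈ V_{l,1} ⊗ V_{m,1},
zero when the triple is not admissible. -/
def wbig (n : ℕ) [NeZero n] (l m : ℕ) (bl bm bj : Fin n → ℤ) : V n l ⊗[F] V n m :=
  if adm n l m bl bm bj then
    ∑ p ∈ Fintype.piFinset (fun t => Finset.range ((bj t).toNat + 1)),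
      (∏ t, ((-1 : F) ^ (p t) * qq ^ ((p t : ℤ) * (bl t - p t + 1)) * qbinom (bj t).toNat (p t))) •
        (vB n l (alphaOf n bl p) ⊗ₜ[F] vB n m (betaOf n bm bj p))
  else (0 : V n l ⊗[F] V n m)

/-- The s-th standard unit vector of ℤ^n. -/
def eun (n : ℕ) [NeZero n] (s : Fin n) : Fin n → ℤ := fun t => if t = s then 1 else 0

/-- The Dynkin index i = 2s ∈ ℤ/2n attached to s ∈ {1,…,n} (s 0-based in Fin n). -/
def iZ (n : ℕ) [NeZero n] (s : Fin n) : Zn n := ((2 * s.val + 2 : ℕ) : Zn n)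

/- ### Coefficients from Propositions 4.3–4.5 -/


def cD1 (n : ℕ) [NeZero n] (bl bm bj : Fin n → ℤ) (s : Fin n) : F := -(qq ^ (-(bj s) - bj (s+1) + bl s + bm (s+1) + 1) * qint (bj s))
def cD2 (n : ℕ) [NeZero n] (bl bm bj : Fin n → ℤ) (s : Fin n) : F := qint (bj s)
def cD3 (n : ℕ) [NeZero n] (bl bm bj : Fin n → ℤ) (s : Fin n) : F := -(qq ^ (-(bj s) - bj (s+1) + bl (s+1) + bm (s+1) + 1) * qint (bj (s+1)))
def cD4 (n : ℕ) [NeZero n] (bl bm bj : Fin n → ℤ) (s : Fin n) : F := qq ^ (-2 * bj s - 2 * bj (s+1) + bl s + bl (s+1) + 2 * bm (s+1) + 2) * qint (bj (s+1))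

def cB1 (n : ℕ) [NeZero n] (bl bm bj : Fin n → ℤ) (s : Fin n) : F := qq ^ (bj s - bj (s+1) - bm s + bm (s+1)) * qint (bl s - bj s)
def cB2 (n : ℕ) [NeZero n] (bl bm bj : Fin n → ℤ) (s : Fin n) : F := qint (bm s - bj s)
def cB3 (n : ℕ) [NeZero n] (bl bm bj : Fin n → ℤ) (s : Fin n) : F := -(qq ^ (bj s - bj (s+1) - bl s - bm s + bl (s+1) + bm (s+1)) * qint (bm s - bj s))
def cB4 (n : ℕ) [NeZero n] (bl bm bj : Fin n → ℤ) (s : Fin n) : F := -(qq ^ (2 * bj s - 2 * bj (s+1) - bl s - 2 * bm s + bl (s+1) + 2 * bm (s+1)) * qint (bl s - bj s))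

def cC1 (n : ℕ) [NeZero n] (bl bm bj : Fin n → ℤ) (s : Fin n) : F := -(qq ^ (-(bj s) + bj (s+1) + bl s - bl (s+1)) * qint (bm (s+1) - bj (s+1)))
def cC2 (n : ℕ) [NeZero n] (bl bm bj : Fin n → ℤ) (s : Fin n) : F := -qint (bl (s+1) - bj (s+1))
def cC3 (n : ℕ) [NeZero n] (bl bm bj : Fin n → ℤ) (s : Fin n) : F := qq ^ (-(bj s) + bj (s+1)) * qint (bl (s+1) - bj (s+1))
def cC4 (n : ℕ) [NeZero n] (bl bm bj : Fin n → ℤ) (s : Fin n) : F := qq ^ (-2 * bj s + 2 * bj (s+1) + bl s - bl (s+1)) * qint (bm (s+1) - bj (s+1))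

/-- The denominator N = [l_s+m_s-2j_s+1][l_{s+1}+m_{s+1}-2j_{s+1}+1]. -/
def cN (n : ℕ) [NeZero n] (bl bm bj : Fin n → ℤ) (s : Fin n) : F := qint (bl s + bm s - 2 * bj s + 1) * qint (bl (s+1) + bm (s+1) - 2 * bj (s+1) + 1)


/-- A_1 as a function of the six integers l_s, l_{s+1}, m_s, m_{s+1}, j_s, j_{s+1}. -/
def sA1 (ls ls1 ms ms1 js js1 : ℤ) : F :=
  qq ^ (js + js1 - ls1 - ms - 1) * qint (ls - js) * qint (ms1 - js1) * qint (ls + ms - js + 1)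
    / (qint (ls + ms - 2 * js + 1) * qint (ls1 + ms1 - 2 * js1 + 1))

def sA2 (ls ls1 ms ms1 js js1 : ℤ) : F :=
  -(qint (ls1 - js1) * qint (ms - js) * qint (ls + ms - js + 1))
    / (qint (ls + ms - 2 * js + 1) * qint (ls1 + ms1 - 2 * js1 + 1))

def sA3 (ls ls1 ms ms1 js js1 : ℤ) : F :=
  qq ^ (js + js1 - ls - ms - 1) * qint (ls1 - js1) * qint (ms - js) * qint (ls1 + ms1 - js1 + 1)
    / (qint (ls + ms - 2 * js + 1) * qint (ls1 + ms1 - 2 * js1 + 1))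

def sA4 (ls ls1 ms ms1 js js1 : ℤ) : F :=
  -(qq ^ (2 * js + 2 * js1 - ls - ls1 - 2 * ms - 2) * qint (ls - js) * qint (ms1 - js1)
      * qint (ls1 + ms1 - js1 + 1))
    / (qint (ls + ms - 2 * js + 1) * qint (ls1 + ms1 - 2 * js1 + 1))


def cA1 (n : ℕ) [NeZero n] (bl bm bj : Fin n → ℤ) (s : Fin n) : F := sA1 (bl s) (bl (s+1)) (bm s) (bm (s+1)) (bj s) (bj (s+1))
def cA2 (n : ℕ) [NeZero n] (bl bm bj : Fin n → ℤ) (s : Fin n) : F := sA2 (bl s) (bl (s+1)) (bm s) (bm (s+1)) (bj s) (bj (s+1))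
def cA3 (n : ℕ) [NeZero n] (bl bm bj : Fin n → ℤ) (s : Fin n) : F := sA3 (bl s) (bl (s+1)) (bm s) (bm (s+1)) (bj s) (bj (s+1))
def cA4 (n : ℕ) [NeZero n] (bl bm bj : Fin n → ℤ) (s : Fin n) : F := sA4 (bl s) (bl (s+1)) (bm s) (bm (s+1)) (bj s) (bj (s+1))

def cBB1 (n : ℕ) [NeZero n] (bl bm bj : Fin n → ℤ) (s : Fin n) : F := cB1 n bl bm bj s * qint (bl s + bm s - bj s + 1)
  * qint (bl (s+1) + bm (s+1) - 2 * bj (s+1)) / cN n bl bm bj s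
def cBB2 (n : ℕ) [NeZero n] (bl bm bj : Fin n → ℤ) (s : Fin n) : F := cB2 n bl bm bj s * qint (bl s + bm s - bj s + 1)
  * qint (bl (s+1) + bm (s+1) - 2 * bj (s+1)) / cN n bl bm bj s
def cBB3 (n : ℕ) [NeZero n] (bl bm bj : Fin n → ℤ) (s : Fin n) : F := cB3 n bl bm bj s * qint (bj (s+1))
  * qint (bl (s+1) + bm (s+1) - 2 * bj (s+1)) / cN n bl bm bj s
def cBB4 (n : ℕ) [NeZero n] (bl bm bj : Fin n → ℤ) (s : Fin n) : F := cB4 n bl bm bj s * qint (bj (s+1))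
  * qint (bl (s+1) + bm (s+1) - 2 * bj (s+1)) / cN n bl bm bj s

def cCC1 (n : ℕ) [NeZero n] (bl bm bj : Fin n → ℤ) (s : Fin n) : F := cC1 n bl bm bj s * qint (bj s) * qint (bl s + bm s - 2 * bj s) / cN n bl bm bj s
def cCC2 (n : ℕ) [NeZero n] (bl bm bj : Fin n → ℤ) (s : Fin n) : F := cC2 n bl bm bj s * qint (bj s) * qint (bl s + bm s - 2 * bj s) / cN n bl bm bj s
def cCC3 (n : ℕ) [NeZero n] (bl bm bj : Fin n → ℤ) (s : Fin n) : F := cC3 n bl bm bj s * qint (bl s + bm s - 2 * bj s)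
  * qint (bl (s+1) + bm (s+1) - bj (s+1) + 1) / cN n bl bm bj s
def cCC4 (n : ℕ) [NeZero n] (bl bm bj : Fin n → ℤ) (s : Fin n) : F := cC4 n bl bm bj s * qint (bl s + bm s - 2 * bj s)
  * qint (bl (s+1) + bm (s+1) - bj (s+1) + 1) / cN n bl bm bj s

def cDD1 (n : ℕ) [NeZero n] (bl bm bj : Fin n → ℤ) (s : Fin n) : F := cD1 n bl bm bj s * qint (bl s + bm s - 2 * bj s)
  * qint (bl (s+1) + bm (s+1) - 2 * bj (s+1)) / cN n bl bm bj s
def cDD2 (n : ℕ) [NeZero n] (bl bm bj : Fin n → ℤ) (s : Fin n) : F := cD2 n bl bm bj s * qint (bl s + bm s - 2 * bj s)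
  * qint (bl (s+1) + bm (s+1) - 2 * bj (s+1)) / cN n bl bm bj s
def cDD3 (n : ℕ) [NeZero n] (bl bm bj : Fin n → ℤ) (s : Fin n) : F := cD3 n bl bm bj s * qint (bl s + bm s - 2 * bj s)
  * qint (bl (s+1) + bm (s+1) - 2 * bj (s+1)) / cN n bl bm bj s
def cDD4 (n : ℕ) [NeZero n] (bl bm bj : Fin n → ℤ) (s : Fin n) : F := cD4 n bl bm bj s * qint (bl s + bm s - 2 * bj s)
  * qint (bl (s+1) + bm (s+1) - 2 * bj (s+1)) / cN n bl bm bj s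


/-- The entry of the matrix C of Proposition 4.8, for row data (s, 𝒍, 𝒎, 𝒋)
and column data (𝒍', 𝒎', 𝒋'). -/
def Centry (n : ℕ) [NeZero n] (s : Fin n) (bl bm bj bl' bm' bj' : Fin n → ℤ) : F :=
  if bl' = bl - eun n s + eun n (s + 1) ∧ bm' = bm ∧ bj' = bj + eun n (s + 1) then
    cA1 n bl bm bj s
  else if bl' = bl ∧ bm' = bm - eun n s + eun n (s + 1) ∧ bj' = bj + eun n (s + 1) then
    cA2 n bl bm bj s
  else if bl' = bl + eun n s - eun n (s + 1) ∧ bm' = bm ∧ bj' = bj + eun n s then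
    cA3 n bl bm bj s
  else if bl' = bl ∧ bm' = bm + eun n s - eun n (s + 1) ∧ bj' = bj + eun n s then
    cA4 n bl bm bj s
  else 0

/-- f ∈ ℚ(q) is regular at q = 0 and vanishes there (i.e. f ∈ qA). -/
def vanishesAt0 (f : F) : Prop :=
  ∃ a b : Polynomial ℚ, Polynomial.eval 0 b ≠ 0 ∧ Polynomial.eval 0 a = 0 ∧
    f = algebraMap (Polynomial ℚ) F a / algebraMap (Polynomial ℚ) F b

lemma qq_ne_zero : qq ≠ 0 := RatFunc.X_ne_zero

noncomputable def gp (k : ℕ) : Polynomial ℚ := ∑ i ∈ Finset.range k, Polynomial.X ^ (2 * i)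

noncomputable def QF (k : ℕ) : F := algebraMap (Polynomial ℚ) F (gp k)

lemma gp_eval {k : ℕ} (hk : 0 < k) : (gp k).eval 0 = 1 := by
  obtain ⟨m, rfl⟩ := Nat.exists_eq_add_of_lt hk
  simp [gp, Polynomial.eval_finset_sum, Finset.sum_range_succ']

lemma QF_ne {k : ℕ} (hk : 0 < k) : QF k ≠ 0 := by
  have h0 : gp k ≠ 0 := by
    intro h
    have := gp_eval hk
    rw [h] at this
    simp at this
  simpa [QF] using RatFunc.algebraMap_ne_zero h0

lemma geom (k : ℕ) : QF k * (qq ^ 2 - 1) = qq ^ (2 * k) - 1 := by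
  have hp : gp k * (Polynomial.X ^ 2 - 1) = Polynomial.X ^ (2 * k) - 1 := by
    have := geom_sum_mul (Polynomial.X ^ 2 : Polynomial ℚ) k
    simpa [gp, pow_mul] using this
  have := congrArg (algebraMap (Polynomial ℚ) F) hp
  simpa [QF, qq, map_mul, map_sub, map_pow, RatFunc.algebraMap_X] using this

lemma qsq_ne : (qq : F) ^ 2 - 1 ≠ 0 := by
  have : (Polynomial.X ^ 2 - 1 : Polynomial ℚ) ≠ 0 := by
    intro h
    have := congrArg (Polynomial.eval 0) h
    simp at this
  have := RatFunc.algebraMap_ne_zero this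
  simpa [qq, map_sub, map_pow, RatFunc.algebraMap_X] using this

lemma qq_sub_inv_ne : qq - qq⁻¹ ≠ 0 := by
  have h : (qq - qq⁻¹) * qq = qq ^ 2 - 1 := by
    rw [sub_mul, inv_mul_cancel₀ qq_ne_zero]
    ring
  intro h0
  apply qsq_ne
  rw [← h, h0, zero_mul]

lemma qintQ (m : ℕ) : qint (m : ℤ) = qq * QF m / qq ^ m := by
  rw [qint, zpow_natCast, zpow_neg, zpow_natCast]
  have hg := geom m
  have hq := qq_ne_zero
  have hd := qq_sub_inv_ne
  have h2 := qsq_ne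
  rw [div_eq_div_iff hd (pow_ne_zero m hq)]
  have key : (qq ^ m - (qq ^ m)⁻¹) * qq ^ m = qq ^ (2*m) - 1 := by
    rw [sub_mul, inv_mul_cancel₀ (pow_ne_zero m hq), two_mul, pow_add]
  rw [key]
  have hd2 : (qq - qq⁻¹) * qq = qq ^ 2 - 1 := by
    rw [sub_mul, inv_mul_cancel₀ hq]
    ring
  calc qq ^ (2*m) - 1 = QF m * (qq^2 - 1) := (geom m).symm
    _ = qq * QF m * (qq - qq⁻¹) := by rw [← hd2]; ring

lemma zpow_eq (s t : ℕ) {e : ℤ} (he : e = (s:ℤ) - t) : qq ^ e = qq ^ s / qq ^ t := by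
  rw [he, zpow_sub₀ qq_ne_zero, zpow_natCast, zpow_natCast]

lemma qint_ne {m : ℕ} (hm : 0 < m) : qint (m : ℤ) ≠ 0 := by
  rw [qintQ]
  exact div_ne_zero (mul_ne_zero qq_ne_zero (QF_ne hm)) (pow_ne_zero _ qq_ne_zero)


lemma r4ne (js js1 a b c d : ℕ) :
    sA4 (js+a+1 : ℕ) (js1+d : ℕ) (js+b : ℕ) (js1+c+1 : ℕ) js js1 ≠ 0 := by
  rw [sA4]
  rw [show ((js+a+1 : ℕ) : ℤ) - (js : ℕ) = ((a+1 : ℕ) : ℤ) by push_cast; ring]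
  rw [show ((js1+c+1 : ℕ) : ℤ) - (js1 : ℕ) = ((c+1 : ℕ) : ℤ) by push_cast; ring]
  rw [show ((js1+d : ℕ) : ℤ) + ((js1+c+1 : ℕ) : ℤ) - (js1 : ℕ) + 1 = ((js1+c+d+2 : ℕ) : ℤ) by push_cast; ring]
  rw [show ((js+a+1 : ℕ) : ℤ) + ((js+b : ℕ) : ℤ) - 2 * (js : ℕ) + 1 = ((a+b+2 : ℕ) : ℤ) by push_cast; ring]
  rw [show ((js1+d : ℕ) : ℤ) + ((js1+c+1 : ℕ) : ℤ) - 2 * (js1 : ℕ) + 1 = ((c+d+2 : ℕ) : ℤ) by push_cast; ring]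
  apply div_ne_zero
  · apply neg_ne_zero.mpr
    exact mul_ne_zero (mul_ne_zero (mul_ne_zero (zpow_ne_zero _ qq_ne_zero)
      (qint_ne (by omega))) (qint_ne (by omega))) (qint_ne (by omega))
  · exact mul_ne_zero (qint_ne (by omega)) (qint_ne (by omega))

lemma r1 (js js1 a b c d : ℕ) :
    sA1 (js+a+1 : ℕ) (js1+d : ℕ) (js+b : ℕ) (js1+c+1 : ℕ) js js1
      / sA4 (js+a+1 : ℕ) (js1+d : ℕ) (js+b : ℕ) (js1+c+1 : ℕ) js js1
    = -(qq ^ (c+d+2) * QF (js+a+b+2)) / QF (js1+c+d+2) := by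
  rw [div_eq_iff (r4ne js js1 a b c d), sA1, sA4]
  rw [show ((js+a+1 : ℕ) : ℤ) - (js : ℕ) = ((a+1 : ℕ) : ℤ) by push_cast; ring]
  rw [show ((js1+c+1 : ℕ) : ℤ) - (js1 : ℕ) = ((c+1 : ℕ) : ℤ) by push_cast; ring]
  rw [show ((js+a+1 : ℕ) : ℤ) + ((js+b : ℕ) : ℤ) - (js : ℕ) + 1 = ((js+a+b+2 : ℕ) : ℤ) by push_cast; ring]
  rw [show ((js1+d : ℕ) : ℤ) + ((js1+c+1 : ℕ) : ℤ) - (js1 : ℕ) + 1 = ((js1+c+d+2 : ℕ) : ℤ) by push_cast; ring]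
  rw [show ((js+a+1 : ℕ) : ℤ) + ((js+b : ℕ) : ℤ) - 2 * (js : ℕ) + 1 = ((a+b+2 : ℕ) : ℤ) by push_cast; ring]
  rw [show ((js1+d : ℕ) : ℤ) + ((js1+c+1 : ℕ) : ℤ) - 2 * (js1 : ℕ) + 1 = ((c+d+2 : ℕ) : ℤ) by push_cast; ring]
  rw [zpow_eq 0 (b+d+1) (show ((js:ℕ):ℤ) + (js1:ℕ) - ((js1+d:ℕ):ℤ) - ((js+b:ℕ):ℤ) - 1 = ((0:ℕ):ℤ) - ((b+d+1:ℕ):ℤ) by push_cast; ring)]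
  rw [zpow_eq js1 (js+a+2*b+d+3) (show 2*((js:ℕ):ℤ) + 2*((js1:ℕ):ℤ) - ((js+a+1:ℕ):ℤ) - ((js1+d:ℕ):ℤ) - 2*((js+b:ℕ):ℤ) - 2 = ((js1:ℕ):ℤ) - ((js+a+2*b+d+3:ℕ):ℤ) by push_cast; ring)]
  rw [qintQ (a+1), qintQ (c+1), qintQ (js+a+b+2), qintQ (js1+c+d+2), qintQ (a+b+2), qintQ (c+d+2)]
  have h1 : QF (a+1) ≠ 0 := QF_ne (by omega)
  have h2 : QF (c+1) ≠ 0 := QF_ne (by omega)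
  have h3 : QF (js+a+b+2) ≠ 0 := QF_ne (by omega)
  have h4 : QF (js1+c+d+2) ≠ 0 := QF_ne (by omega)
  have h5 : QF (a+b+2) ≠ 0 := QF_ne (by omega)
  have h6 : QF (c+d+2) ≠ 0 := QF_ne (by omega)
  have hq := qq_ne_zero
  field_simp
  ring

lemma r2 (js js1 a b c d : ℕ) :
    sA2 (js+a+1 : ℕ) (js1+d : ℕ) (js+b : ℕ) (js1+c+1 : ℕ) js js1
      / sA4 (js+a+1 : ℕ) (js1+d : ℕ) (js+b : ℕ) (js1+c+1 : ℕ) js js1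
    = qq ^ (a+2*c+d+5) * (QF d * QF b * QF (js+a+b+2))
        / (QF (a+1) * QF (c+1) * QF (js1+c+d+2)) := by
  rw [div_eq_iff (r4ne js js1 a b c d), sA2, sA4]
  rw [show ((js+a+1 : ℕ) : ℤ) - (js : ℕ) = ((a+1 : ℕ) : ℤ) by push_cast; ring]
  rw [show ((js1+c+1 : ℕ) : ℤ) - (js1 : ℕ) = ((c+1 : ℕ) : ℤ) by push_cast; ring]
  rw [show ((js1+d : ℕ) : ℤ) - (js1 : ℕ) = ((d : ℕ) : ℤ) by push_cast; ring]
  rw [show ((js+b : ℕ) : ℤ) - (js : ℕ) = ((b : ℕ) : ℤ) by push_cast; ring]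
  rw [show ((js+a+1 : ℕ) : ℤ) + ((js+b : ℕ) : ℤ) - (js : ℕ) + 1 = ((js+a+b+2 : ℕ) : ℤ) by push_cast; ring]
  rw [show ((js1+d : ℕ) : ℤ) + ((js1+c+1 : ℕ) : ℤ) - (js1 : ℕ) + 1 = ((js1+c+d+2 : ℕ) : ℤ) by push_cast; ring]
  rw [show ((js+a+1 : ℕ) : ℤ) + ((js+b : ℕ) : ℤ) - 2 * (js : ℕ) + 1 = ((a+b+2 : ℕ) : ℤ) by push_cast; ring]
  rw [show ((js1+d : ℕ) : ℤ) + ((js1+c+1 : ℕ) : ℤ) - 2 * (js1 : ℕ) + 1 = ((c+d+2 : ℕ) : ℤ) by push_cast; ring]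
  rw [zpow_eq js1 (js+a+2*b+d+3) (show 2*((js:ℕ):ℤ) + 2*((js1:ℕ):ℤ) - ((js+a+1:ℕ):ℤ) - ((js1+d:ℕ):ℤ) - 2*((js+b:ℕ):ℤ) - 2 = ((js1:ℕ):ℤ) - ((js+a+2*b+d+3:ℕ):ℤ) by push_cast; ring)]
  rw [qintQ (a+1), qintQ (c+1), qintQ d, qintQ b, qintQ (js+a+b+2), qintQ (js1+c+d+2),
    qintQ (a+b+2), qintQ (c+d+2)]
  have h1 : QF (a+1) ≠ 0 := QF_ne (by omega)
  have h2 : QF (c+1) ≠ 0 := QF_ne (by omega)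
  have h3 : QF (js+a+b+2) ≠ 0 := QF_ne (by omega)
  have h4 : QF (js1+c+d+2) ≠ 0 := QF_ne (by omega)
  have h5 : QF (a+b+2) ≠ 0 := QF_ne (by omega)
  have h6 : QF (c+d+2) ≠ 0 := QF_ne (by omega)
  have hq := qq_ne_zero
  field_simp
  ring

lemma r3 (js js1 a b c d : ℕ) :
    sA3 (js+a+1 : ℕ) (js1+d : ℕ) (js+b : ℕ) (js1+c+1 : ℕ) js js1
      / sA4 (js+a+1 : ℕ) (js1+d : ℕ) (js+b : ℕ) (js1+c+1 : ℕ) js js1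
    = -(qq ^ (a+c+3) * (QF d * QF b)) / (QF (a+1) * QF (c+1)) := by
  rw [div_eq_iff (r4ne js js1 a b c d), sA3, sA4]
  rw [show ((js+a+1 : ℕ) : ℤ) - (js : ℕ) = ((a+1 : ℕ) : ℤ) by push_cast; ring]
  rw [show ((js1+c+1 : ℕ) : ℤ) - (js1 : ℕ) = ((c+1 : ℕ) : ℤ) by push_cast; ring]
  rw [show ((js1+d : ℕ) : ℤ) - (js1 : ℕ) = ((d : ℕ) : ℤ) by push_cast; ring]
  rw [show ((js+b : ℕ) : ℤ) - (js : ℕ) = ((b : ℕ) : ℤ) by push_cast; ring]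
  rw [show ((js1+d : ℕ) : ℤ) + ((js1+c+1 : ℕ) : ℤ) - (js1 : ℕ) + 1 = ((js1+c+d+2 : ℕ) : ℤ) by push_cast; ring]
  rw [show ((js+a+1 : ℕ) : ℤ) + ((js+b : ℕ) : ℤ) - 2 * (js : ℕ) + 1 = ((a+b+2 : ℕ) : ℤ) by push_cast; ring]
  rw [show ((js1+d : ℕ) : ℤ) + ((js1+c+1 : ℕ) : ℤ) - 2 * (js1 : ℕ) + 1 = ((c+d+2 : ℕ) : ℤ) by push_cast; ring]
  rw [zpow_eq js1 (js+a+b+2) (show ((js:ℕ):ℤ) + ((js1:ℕ):ℤ) - ((js+a+1:ℕ):ℤ) - ((js+b:ℕ):ℤ) - 1 = ((js1:ℕ):ℤ) - ((js+a+b+2:ℕ):ℤ) by push_cast; ring)]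
  rw [zpow_eq js1 (js+a+2*b+d+3) (show 2*((js:ℕ):ℤ) + 2*((js1:ℕ):ℤ) - ((js+a+1:ℕ):ℤ) - ((js1+d:ℕ):ℤ) - 2*((js+b:ℕ):ℤ) - 2 = ((js1:ℕ):ℤ) - ((js+a+2*b+d+3:ℕ):ℤ) by push_cast; ring)]
  rw [qintQ (a+1), qintQ (c+1), qintQ d, qintQ b, qintQ (js1+c+d+2),
    qintQ (a+b+2), qintQ (c+d+2)]
  have h1 : QF (a+1) ≠ 0 := QF_ne (by omega)
  have h2 : QF (c+1) ≠ 0 := QF_ne (by omega)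
  have h4 : QF (js1+c+d+2) ≠ 0 := QF_ne (by omega)
  have h5 : QF (a+b+2) ≠ 0 := QF_ne (by omega)
  have h6 : QF (c+d+2) ≠ 0 := QF_ne (by omega)
  have hq := qq_ne_zero
  field_simp
  ring


lemma van_mk (e : ℕ) (he : 0 < e) (p r : Polynomial ℚ) (hr : r.eval 0 ≠ 0) :
    vanishesAt0 (qq ^ e * algebraMap (Polynomial ℚ) F p / algebraMap (Polynomial ℚ) F r) := by
  refine ⟨Polynomial.X ^ e * p, r, hr, ?_, ?_⟩
  · simp [zero_pow he.ne']
  · rw [map_mul, map_pow]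
    simp [qq, RatFunc.algebraMap_X]


/-- Under 0 ≤ j_t ≤ min(l_t,m_t) (t = s, s+1), j_s < l_s and
j_{s+1} < m_{s+1}, one has A_4 ≠ 0 and A_t/A_4 ∈ qA for t = 1,2,3, where A is the
ring of rational functions regular at q = 0. -/
theorem statement18 (ls ls1 ms ms1 js js1 : ℕ)
    (h1 : js ≤ min ls ms) (h2 : js1 ≤ min ls1 ms1) (h3 : js < ls) (h4 : js1 < ms1) :
    sA4 ls ls1 ms ms1 js js1 ≠ 0
  ∧ vanishesAt0 (sA1 ls ls1 ms ms1 js js1 / sA4 ls ls1 ms ms1 js js1)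
  ∧ vanishesAt0 (sA2 ls ls1 ms ms1 js js1 / sA4 ls ls1 ms ms1 js js1)
  ∧ vanishesAt0 (sA3 ls ls1 ms ms1 js js1 / sA4 ls ls1 ms ms1 js js1) := by
  obtain ⟨a, rfl⟩ : ∃ a, ls = js + a + 1 := ⟨ls - js - 1, by omega⟩
  obtain ⟨b, rfl⟩ : ∃ b, ms = js + b := ⟨ms - js, by omega⟩
  obtain ⟨c, rfl⟩ : ∃ c, ms1 = js1 + c + 1 := ⟨ms1 - js1 - 1, by omega⟩
  obtain ⟨d, rfl⟩ : ∃ d, ls1 = js1 + d := ⟨ls1 - js1, by omega⟩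
  refine ⟨r4ne js js1 a b c d, ?_, ?_, ?_⟩
  · rw [r1 js js1 a b c d]
    have : -(qq ^ (c+d+2) * QF (js+a+b+2)) / QF (js1+c+d+2)
        = qq ^ (c+d+2) * algebraMap (Polynomial ℚ) F (-(gp (js+a+b+2)))
          / algebraMap (Polynomial ℚ) F (gp (js1+c+d+2)) := by
      rw [map_neg]
      unfold QF
      ring
    rw [this]
    exact van_mk _ (by omega) _ _ (by rw [gp_eval (by omega)]; norm_num)
  · rw [r2 js js1 a b c d]
    have : qq ^ (a+2*c+d+5) * (QF d * QF b * QF (js+a+b+2))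
        / (QF (a+1) * QF (c+1) * QF (js1+c+d+2))
        = qq ^ (a+2*c+d+5) * algebraMap (Polynomial ℚ) F (gp d * gp b * gp (js+a+b+2))
          / algebraMap (Polynomial ℚ) F (gp (a+1) * gp (c+1) * gp (js1+c+d+2)) := by
      simp only [map_mul]
      unfold QF
      ring
    rw [this]
    refine van_mk _ (by omega) _ _ ?_
    simp only [Polynomial.eval_mul]
    rw [gp_eval (k := a+1) (by omega), gp_eval (k := c+1) (by omega),
      gp_eval (k := js1+c+d+2) (by omega)]
    norm_num
  · rw [r3 js js1 a b c d]
    have : -(qq ^ (a+c+3) * (QF d * QF b)) / (QF (a+1) * QF (c+1))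
        = qq ^ (a+c+3) * algebraMap (Polynomial ℚ) F (-(gp d * gp b))
          / algebraMap (Polynomial ℚ) F (gp (a+1) * gp (c+1)) := by
      simp only [map_mul, map_neg]
      unfold QF
      ring
    rw [this]
    refine van_mk _ (by omega) _ _ ?_
    simp only [Polynomial.eval_mul]
    rw [gp_eval (k := a+1) (by omega), gp_eval (k := c+1) (by omega)]
    norm_num


end AII
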